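/- Let y ∈ ℝ^n be dominant. Then for every x ∈ ℝ^n one has r(x) = y if and only if p_y(x) = y and x ≤ y. -/

import Mathlib

/-- The dominant cone `C = {x ∈ ℝⁿ : x₁ ≥ x₂ ≥ ⋯ ≥ xₙ}`. -/
def domCone (n : ℕ) : Set (EuclideanSpace ℝ (Fin n)) :=
  {x | ∀ i j : Fin n, i ≤ j → x j ≤ x i}

/-- `r` is the map sending each point of `ℝⁿ` to the (unique) closest point
of the dominant cone. -/
def IsClosestPointMap (n : ℕ)
    (r : EuclideanSpace ℝ (Fin n) → EuclideanSpace ℝ (Fin n)) : Prop :=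
  ∀ x, r x ∈ domCone n ∧ ∀ c ∈ domCone n, dist x (r x) ≤ dist x c

/-- `S_k(x) = x₁ + ⋯ + x_k`, the sum of the first `k` coordinates. -/
def psum {n : ℕ} (x : Fin n → ℝ) (k : ℕ) : ℝ :=
  ∑ j ∈ Finset.univ.filter (fun j : Fin n => (j : ℕ) < k), x j

/-- The dominance order: `x ≤ y` iff `S_k(x) ≤ S_k(y)` for `k = 1, …, n-1`
and `S_n(x) = S_n(y)`. -/
def dle {n : ℕ} (x y : Fin n → ℝ) : Prop :=
  (∀ k, 1 ≤ k → k < n → psum x k ≤ psum y k) ∧ psum x n = psum y n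

open Classical in
/-- `blockAvg y x i` is the arithmetic mean of the coordinates `x j` over the block
(level set) of `y` containing the index `i`; for dominant `y` this is the
projection `p_M` onto `𝔞_M` of the paper. -/
noncomputable def blockAvg {n : ℕ} (y x : Fin n → ℝ) (i : Fin n) : ℝ :=
  (∑ j ∈ Finset.univ.filter (fun j : Fin n => y j = y i), x j) /
    ((Finset.univ.filter (fun j : Fin n => y j = y i)).card : ℝ)


set_option linter.unusedSectionVars false

namespace Aux

lemma abel_nat (f g : ℕ → ℝ) (n : ℕ) :
    ∑ k ∈ Finset.range n, f k * g k =
      (∑ k ∈ Finset.range n,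
        (∑ j ∈ Finset.range (k+1), f j) * (g k - g (k+1)))
      + (∑ j ∈ Finset.range n, f j) * g n := by
  induction n with
  | zero => simp
  | succ n ih =>
    rw [Finset.sum_range_succ, Finset.sum_range_succ (fun k => (∑ j ∈ Finset.range (k+1), f j) * (g k - g (k+1))), ih,
      Finset.sum_range_succ f]
    ring

lemma psum_eq_range {n : ℕ} (v : Fin n → ℝ) (k : ℕ) :
    psum v k = ∑ j ∈ Finset.range k, (if h : j < n then v ⟨j, h⟩ else 0) := by
  unfold psum
  rw [Finset.sum_filter]
  have h1 : ∀ a : Fin n, (if (a:ℕ) < k then v a else 0)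
      = (fun j => if j < k then (if h : j < n then v ⟨j,h⟩ else 0) else 0) (a:ℕ) := by
    intro a; simp [a.is_lt]
  rw [Finset.sum_congr rfl (fun a _ => h1 a),
    Fin.sum_univ_eq_sum_range (fun j => if j < k then (if h : j < n then v ⟨j,h⟩ else 0) else 0)]
  rcases le_or_gt k n with hkn | hkn
  · rw [← Finset.sum_filter]
    apply Finset.sum_congr _ (fun _ _ => rfl)
    ext j; simp; omega
  · have h2 : ∑ j ∈ Finset.range n, (if j < k then (if h : j < n then v ⟨j,h⟩ else 0) else 0)
        = ∑ j ∈ Finset.range n, (if h : j < n then v ⟨j,h⟩ else 0) := by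
      apply Finset.sum_congr rfl
      intro j hj
      rw [if_pos (lt_trans (Finset.mem_range.mp hj) hkn)]
    rw [h2]
    exact Finset.sum_subset (Finset.range_subset_range.mpr hkn.le)
      (fun j _ hj => dif_neg (by simpa using hj))

lemma psum_zero {n : ℕ} (v : Fin n → ℝ) : psum v 0 = 0 := by
  simp [psum]

lemma psum_univ {n : ℕ} (v : Fin n → ℝ) : psum v n = ∑ i, v i := by
  unfold psum
  apply Finset.sum_congr _ (fun _ _ => rfl)
  ext j; simp [j.is_lt]

lemma psum_sub {n : ℕ} (x y : Fin n → ℝ) (k : ℕ) :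
    psum (fun i => x i - y i) k = psum x k - psum y k := by
  simp [psum, Finset.sum_sub_distrib]


open Finset

lemma mem_iff_lt_card {n : ℕ} (S : Finset (Fin n))
    (hS : ∀ ⦃j j' : Fin n⦄, j' ≤ j → j ∈ S → j' ∈ S) (i : Fin n) :
    i ∈ S ↔ (i : ℕ) < S.card := by
  constructor
  · intro hi
    have h1 : Finset.Iic i ⊆ S := fun j hj => hS (Finset.mem_Iic.mp hj) hi
    have := Finset.card_le_card h1
    rw [Fin.card_Iic] at this; omega
  · intro h
    by_contra hi
    have h1 : S ⊆ Finset.Iio i := by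
      intro j hj
      rw [Finset.mem_Iio]
      by_contra hji
      exact hi (hS (not_lt.mp hji) hj)
    have := Finset.card_le_card h1
    rw [Fin.card_Iio] at this; omega

variable {n : ℕ} (y : Fin n → ℝ)

/-- the set of indices with value strictly above `y i` -/
noncomputable def S1 (i : Fin n) : Finset (Fin n) :=
  Finset.univ.filter (fun j => y i < y j)

/-- the set of indices with value at least `y i` -/
noncomputable def S2 (i : Fin n) : Finset (Fin n) :=
  Finset.univ.filter (fun j => y i ≤ y j)

variable (hy : ∀ i j : Fin n, i ≤ j → y j ≤ y i)

include hy

lemma mem_S1 (i j : Fin n) : j ∈ S1 y i ↔ (j : ℕ) < (S1 y i).card := by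
  apply mem_iff_lt_card
  intro a a' ha hma
  simp only [S1, Finset.mem_filter, Finset.mem_univ, true_and] at hma ⊢
  exact lt_of_lt_of_le hma (hy a' a ha)

lemma mem_S2 (i j : Fin n) : j ∈ S2 y i ↔ (j : ℕ) < (S2 y i).card := by
  apply mem_iff_lt_card
  intro a a' ha hma
  simp only [S2, Finset.mem_filter, Finset.mem_univ, true_and] at hma ⊢
  exact le_trans hma (hy a' a ha)

lemma k1_le (i : Fin n) : (S1 y i).card ≤ (i : ℕ) := by
  have hi : i ∉ S1 y i := by simp [S1]
  rw [mem_S1 y hy] at hi; omega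

lemma lt_k2 (i : Fin n) : (i : ℕ) < (S2 y i).card := by
  have hi : i ∈ S2 y i := by simp [S2]
  rwa [mem_S2 y hy] at hi

omit hy

lemma k2_le (i : Fin n) : (S2 y i).card ≤ n := by
  have := Finset.card_le_univ (S2 y i)
  simpa using this

lemma block_eq (i : Fin n) :
    Finset.univ.filter (fun j => y j = y i) = S2 y i \ S1 y i := by
  ext j
  simp only [S1, S2, Finset.mem_sdiff, Finset.mem_filter, Finset.mem_univ, true_and, not_lt]
  constructor
  · intro h; exact ⟨le_of_eq h.symm, le_of_eq h⟩
  · intro h; exact le_antisymm h.2 h.1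

include hy

lemma sum_S1 (v : Fin n → ℝ) (i : Fin n) :
    ∑ j ∈ S1 y i, v j = psum v (S1 y i).card := by
  unfold psum
  apply Finset.sum_congr _ (fun _ _ => rfl)
  ext j
  simp only [Finset.mem_filter, Finset.mem_univ, true_and]
  rw [mem_S1 y hy]

lemma sum_S2 (v : Fin n → ℝ) (i : Fin n) :
    ∑ j ∈ S2 y i, v j = psum v (S2 y i).card := by
  unfold psum
  apply Finset.sum_congr _ (fun _ _ => rfl)
  ext j
  simp only [Finset.mem_filter, Finset.mem_univ, true_and]
  rw [mem_S2 y hy]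

lemma blocksum (v : Fin n → ℝ) (i : Fin n) :
    ∑ j ∈ Finset.univ.filter (fun j => y j = y i), v j
      = psum v (S2 y i).card - psum v (S1 y i).card := by
  have hsub : S1 y i ⊆ S2 y i := by
    intro j hj
    simp only [S1, S2, Finset.mem_filter, Finset.mem_univ, true_and] at hj ⊢
    exact le_of_lt hj
  have := Finset.sum_sdiff (f := v) hsub
  rw [block_eq y i]
  rw [← sum_S1 y hy v i, ← sum_S2 y hy v i]
  linarith

lemma blockAvg_iff (x : Fin n → ℝ) (i : Fin n) :
    blockAvg y x i = y i ↔
      ∑ j ∈ Finset.univ.filter (fun j => y j = y i), (x j - y j) = 0 := by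
  classical
  set B := Finset.univ.filter (fun j : Fin n => y j = y i) with hB
  have hiB : i ∈ B := by simp [hB]
  have hcard : (B.card : ℝ) ≠ 0 := by
    have : 0 < B.card := Finset.card_pos.mpr ⟨i, hiB⟩
    exact_mod_cast this.ne'
  have hysum : ∑ j ∈ B, y j = (B.card : ℝ) * y i := by
    rw [Finset.sum_congr rfl (fun j hj => by
      simp only [hB, Finset.mem_filter] at hj; exact hj.2)]
    rw [Finset.sum_const, nsmul_eq_mul]
  rw [Finset.sum_sub_distrib, hysum]
  unfold blockAvg
  rw [div_eq_iff hcard]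
  constructor
  · intro h; rw [show (∑ j ∈ B, x j) = y i * B.card from h]; ring
  · intro h; rw [show (∑ j ∈ B, x j) = (B.card : ℝ) * y i from by linarith]; ring

/-- Forward: boundary partial sums vanish implies block averages agree. -/
lemma boundary_to_blockAvg (x : Fin n → ℝ)
    (hE : ∀ k, (hk : k + 1 < n) → y ⟨k, by omega⟩ ≠ y ⟨k+1, hk⟩ →
      psum (fun j => x j - y j) (k+1) = 0)
    (hn0 : psum (fun j => x j - y j) n = 0)
    (i : Fin n) : blockAvg y x i = y i := by
  set v : Fin n → ℝ := fun j => x j - y j with hv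
  rw [blockAvg_iff y hy x i, blocksum y hy v i]
  have h1 : psum v (S1 y i).card = 0 := by
    rcases Nat.eq_zero_or_pos (S1 y i).card with h0 | hpos
    · rw [h0]; exact psum_zero v
    · set m := (S1 y i).card with hm
      have hmi : m ≤ (i : ℕ) := k1_le y hy i
      have hmn : m < n := lt_of_le_of_lt hmi i.is_lt
      have hk : m - 1 + 1 < n := by omega
      have hmem : (⟨m - 1, by omega⟩ : Fin n) ∈ S1 y i := by
        rw [mem_S1 y hy]; simp; omega
      have hnmem : (⟨m - 1 + 1, hk⟩ : Fin n) ∉ S1 y i := by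
        rw [mem_S1 y hy]; simp; omega
      simp only [S1, Finset.mem_filter, Finset.mem_univ, true_and, not_lt] at hmem hnmem
      have hne : y (⟨m - 1, by omega⟩ : Fin n) ≠ y (⟨m - 1 + 1, hk⟩ : Fin n) :=
        ne_of_gt (lt_of_le_of_lt hnmem hmem)
      have := hE (m - 1) hk hne
      rwa [show m - 1 + 1 = m by omega] at this
  have h2 : psum v (S2 y i).card = 0 := by
    rcases eq_or_lt_of_le (k2_le y i) with h0 | hlt
    · rw [h0]; exact hn0
    · set m := (S2 y i).card with hm
      have hmpos : 0 < m := by have := lt_k2 y hy i; omega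
      have hk : m - 1 + 1 < n := by omega
      have hmem : (⟨m - 1, by omega⟩ : Fin n) ∈ S2 y i := by
        rw [mem_S2 y hy]; simp; omega
      have hnmem : (⟨m - 1 + 1, hk⟩ : Fin n) ∉ S2 y i := by
        rw [mem_S2 y hy]; simp; omega
      simp only [S2, Finset.mem_filter, Finset.mem_univ, true_and, not_le] at hmem hnmem
      have hne : y (⟨m - 1, by omega⟩ : Fin n) ≠ y (⟨m - 1 + 1, hk⟩ : Fin n) :=
        ne_of_gt (lt_of_lt_of_le hnmem hmem)
      have := hE (m - 1) hk hne
      rwa [show m - 1 + 1 = m by omega] at this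
  rw [h1, h2]; ring

/-- Backward: block averages agreeing implies partial sums up to `(S2 y i).card` vanish. -/
lemma blockAvg_to_psum (x : Fin n → ℝ)
    (hA : ∀ i, blockAvg y x i = y i) :
    ∀ m : ℕ, ∀ i : Fin n, (S2 y i).card = m → psum (fun j => x j - y j) m = 0 := by
  intro m
  induction m using Nat.strong_induction_on with
  | _ m ih =>
    intro i him
    set v : Fin n → ℝ := fun j => x j - y j with hv
    have hbs : ∑ j ∈ Finset.univ.filter (fun j => y j = y i), v j
        = psum v (S2 y i).card - psum v (S1 y i).card := blocksum y hy v i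
    have hbz : ∑ j ∈ Finset.univ.filter (fun j => y j = y i), v j = 0 :=
      (blockAvg_iff y hy x i).mp (hA i)
    rw [hbz] at hbs
    rw [him] at hbs
    have hmain : psum v m = psum v (S1 y i).card := by linarith
    rcases Nat.eq_zero_or_pos (S1 y i).card with h0 | hpos
    · rw [hmain, h0]; exact psum_zero v
    · set k1 := (S1 y i).card with hk1
      have hk1i : k1 ≤ (i : ℕ) := k1_le y hy i
      have hk1n : k1 - 1 < n := by have := i.is_lt; omega
      set i' : Fin n := ⟨k1 - 1, hk1n⟩ with hi'
      have hi'S1 : i' ∈ S1 y i := by rw [mem_S1 y hy]; simp [hi']; omega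
      have hyi' : y i < y i' := by
        simpa [S1] using hi'S1
      have hS2eq : S2 y i' = S1 y i := by
        ext j
        simp only [S1, S2, Finset.mem_filter, Finset.mem_univ, true_and]
        constructor
        · intro h; exact lt_of_lt_of_le hyi' h
        · intro h
          have hj : j ∈ S1 y i := by simp [S1, h]
          rw [mem_S1 y hy] at hj
          exact hy j i' (by rw [Fin.le_def]; simp [hi']; omega)
      have hlt : k1 < m := by
        have := lt_k2 y hy i; omega
      have := ih k1 hlt i' (by rw [hS2eq])
      rw [hmain]; exact this

/-- card of S2 at a strict descent. -/
lemma S2_card_boundary (k : ℕ) (hk : k + 1 < n)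
    (hlt : y ⟨k+1, hk⟩ < y ⟨k, by omega⟩) :
    (S2 y ⟨k, by omega⟩).card = k + 1 := by
  have heq : S2 y ⟨k, by omega⟩ = Finset.Iic (⟨k, by omega⟩ : Fin n) := by
    ext j
    simp only [S2, Finset.mem_filter, Finset.mem_univ, true_and, Finset.mem_Iic]
    constructor
    · intro h
      by_contra hj
      have hj' : k + 1 ≤ (j : ℕ) := by
        simp only [Fin.le_def, Fin.val_mk, not_le] at hj; omega
      have := hy ⟨k+1, hk⟩ j (by rw [Fin.le_def]; exact hj')
      exact absurd h (not_le.mpr (lt_of_le_of_lt this hlt))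
    · intro h; exact hy j ⟨k, by omega⟩ h
  rw [heq, Fin.card_Iic]

omit hy in
lemma sum_mul_eq (v c : Fin n → ℝ) :
    ∑ i, v i * c i = ∑ k ∈ Finset.range n,
      psum v (k+1) * ((if h : k < n then c ⟨k,h⟩ else 0)
        - (if h : k+1 < n then c ⟨k+1,h⟩ else 0)) := by
  set f : ℕ → ℝ := fun j => if h : j < n then v ⟨j,h⟩ else 0 with hf
  set g : ℕ → ℝ := fun j => if h : j < n then c ⟨j,h⟩ else 0 with hg
  have h1 : ∑ i : Fin n, v i * c i = ∑ k ∈ Finset.range n, f k * g k := by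
    rw [← Fin.sum_univ_eq_sum_range (fun k => f k * g k) n]
    apply Finset.sum_congr rfl
    intro i _
    simp [hf, hg, i.is_lt]
  rw [h1, abel_nat f g n]
  have hgn : g n = 0 := dif_neg (lt_irrefl n)
  rw [hgn, mul_zero, add_zero]
  apply Finset.sum_congr rfl
  intro k _
  rw [psum_eq_range]

omit hy in
lemma step_dominant (k : ℕ) :
    ∀ i j : Fin n, i ≤ j →
      (if (j:ℕ) < k then (1:ℝ) else 0) ≤ (if (i:ℕ) < k then (1:ℝ) else 0) := by
  intro i j hij
  by_cases hj : (j:ℕ) < k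
  · rw [if_pos hj, if_pos (lt_of_le_of_lt (Fin.le_def.mp hij) hj)]
  · rw [if_neg hj]
    by_cases hi : (i:ℕ) < k <;> simp [hi]

omit hy in
lemma cone_iff (u : Fin n → ℝ) :
    (∀ c : Fin n → ℝ, (∀ i j : Fin n, i ≤ j → c j ≤ c i) → ∑ i, u i * c i ≤ 0)
      ↔ ((∀ k, 1 ≤ k → k < n → psum u k ≤ 0) ∧ psum u n = 0) := by
  constructor
  · intro h
    have h1 := h (fun _ => 1) (fun _ _ _ => le_refl _)
    have h2 := h (fun _ => -1) (fun _ _ _ => le_refl _)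
    simp only [mul_one, mul_neg_one] at h1 h2
    rw [Finset.sum_neg_distrib] at h2
    have htot : psum u n = 0 := by
      rw [psum_univ]; linarith
    refine ⟨?_, htot⟩
    intro k hk1 hkn
    have h3 := h (fun j => if (j:ℕ) < k then (1:ℝ) else 0) (step_dominant k)
    have h4 : ∑ i : Fin n, u i * (if (i:ℕ) < k then (1:ℝ) else 0) = psum u k := by
      unfold psum
      rw [Finset.sum_filter]
      apply Finset.sum_congr rfl
      intro i _
      by_cases hi : (i:ℕ) < k <;> simp [hi]
    rwa [h4] at h3
  · rintro ⟨hle, h0⟩ c hc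
    rw [sum_mul_eq u c]
    apply Finset.sum_nonpos
    intro k hk
    rw [Finset.mem_range] at hk
    rcases lt_or_ge (k+1) n with h2 | h2
    · rw [dif_pos hk, dif_pos h2]
      have hps : psum u (k+1) ≤ 0 := hle (k+1) (by omega) h2
      have hd : c ⟨k+1, h2⟩ ≤ c ⟨k, hk⟩ := hc _ _ (by rw [Fin.le_def]; simp)
      exact mul_nonpos_iff.mpr (Or.inr ⟨hps, by linarith⟩)
    · have hk1 : k + 1 = n := by omega
      rw [hk1, h0, zero_mul]

include hy in
lemma inner_y_iff (u : Fin n → ℝ)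
    (hmono : ∀ k, 1 ≤ k → k < n → psum u k ≤ 0) (h0 : psum u n = 0) :
    (∑ i, u i * y i = 0) ↔
      (∀ k, (hk : k+1 < n) → y ⟨k, by omega⟩ ≠ y ⟨k+1, hk⟩ → psum u (k+1) = 0) := by
  rw [sum_mul_eq u y]
  have hnonpos : ∀ k ∈ Finset.range n,
      psum u (k+1) * ((if h : k < n then y ⟨k,h⟩ else 0)
        - (if h : k+1 < n then y ⟨k+1,h⟩ else 0)) ≤ 0 := by
    intro k hk
    rw [Finset.mem_range] at hk
    rcases lt_or_ge (k+1) n with h2 | h2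
    · rw [dif_pos hk, dif_pos h2]
      have hps : psum u (k+1) ≤ 0 := hmono (k+1) (by omega) h2
      have hd : y ⟨k+1, h2⟩ ≤ y ⟨k, hk⟩ := hy _ _ (by rw [Fin.le_def]; simp)
      exact mul_nonpos_iff.mpr (Or.inr ⟨hps, by linarith⟩)
    · have hk1 : k + 1 = n := by omega
      rw [hk1, h0, zero_mul]
  constructor
  · intro hz k hk hne
    have := (Finset.sum_eq_zero_iff_of_nonpos hnonpos).mp hz k
      (Finset.mem_range.mpr (by omega))
    rw [dif_pos (by omega : k < n), dif_pos hk] at this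
    rcases mul_eq_zero.mp this with h | h
    · exact h
    · exfalso
      have hd : y ⟨k+1, hk⟩ ≤ y ⟨k, by omega⟩ := hy _ _ (by rw [Fin.le_def]; simp)
      have : y (⟨k, by omega⟩ : Fin n) = y ⟨k+1, hk⟩ := by linarith
      exact hne this
  · intro hE
    apply Finset.sum_eq_zero
    intro k hk
    rw [Finset.mem_range] at hk
    rcases lt_or_ge (k+1) n with h2 | h2
    · by_cases hne : y (⟨k, hk⟩ : Fin n) = y ⟨k+1, h2⟩
      · rw [dif_pos hk, dif_pos h2, hne, sub_self, mul_zero]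
      · rw [hE k h2 hne, zero_mul]
    · have hk1 : k + 1 = n := by omega
      rw [hk1, h0, zero_mul]

end Aux

namespace Aux2

lemma inner_eq_sum {n : ℕ} (u c : EuclideanSpace ℝ (Fin n)) :
    (inner ℝ u c : ℝ) = ∑ i, u i * c i := by
  simp [PiLp.inner_apply, RCLike.inner_apply, conj_trivial, mul_comm]

lemma closest_varineq {n : ℕ} {K : Set (EuclideanSpace ℝ (Fin n))} (hK : Convex ℝ K)
    {x z : EuclideanSpace ℝ (Fin n)} (hz : z ∈ K)
    (hmin : ∀ c ∈ K, dist x z ≤ dist x c) : ∀ c ∈ K, (inner ℝ (x - z) (c - z) : ℝ) ≤ 0 := by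
  apply (norm_eq_iInf_iff_real_inner_le_zero hK hz).mp
  haveI : Nonempty K := ⟨⟨z, hz⟩⟩
  apply le_antisymm
  · apply le_ciInf; intro w
    simpa [dist_eq_norm] using hmin w w.2
  · exact ciInf_le ⟨0, by rintro b ⟨w, rfl⟩; exact norm_nonneg _⟩ (⟨z, hz⟩ : K)

lemma eq_of_varineqs {n : ℕ} (x z w : EuclideanSpace ℝ (Fin n))
    (h1 : (inner ℝ (x - z) (w - z) : ℝ) ≤ 0) (h2 : (inner ℝ (x - w) (z - w) : ℝ) ≤ 0) :
    z = w := by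
  have h3 : (inner ℝ (x - w) (z - w) : ℝ) - (inner ℝ (x - z) (z - w) : ℝ)
      = (inner ℝ (z - w) (z - w) : ℝ) := by
    rw [← inner_sub_left]; congr 1; abel
  have h4 : (inner ℝ (x - z) (z - w) : ℝ) = - (inner ℝ (x - z) (w - z) : ℝ) := by
    rw [← inner_neg_right]; congr 1; abel
  have key : (inner ℝ (z - w) (z - w) : ℝ) ≤ 0 := by linarith
  have : z - w = 0 := real_inner_self_nonpos.mp key
  exact sub_eq_zero.mp this

lemma domCone_convex (n : ℕ) : Convex ℝ (domCone n) := by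
  intro a ha b hb s t hs ht hst i j hij
  have h1 := ha i j hij
  have h2 := hb i j hij
  show (s • a + t • b) j ≤ (s • a + t • b) i
  simp only [PiLp.add_apply, PiLp.smul_apply, smul_eq_mul]
  nlinarith [mul_le_mul_of_nonneg_left h1 hs, mul_le_mul_of_nonneg_left h2 ht]

end Aux2


/-- Proposition 1.1(2) for `GL_n`: for dominant `y`, `r x = y` iff `p_y(x) = y`
and `x ≤ y` in the dominance order. -/
theorem stmt_1 (n : ℕ) (hn : 1 ≤ n)
    (r : EuclideanSpace ℝ (Fin n) → EuclideanSpace ℝ (Fin n))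
    (hr : IsClosestPointMap n r)
    (y : EuclideanSpace ℝ (Fin n)) (hy : y ∈ domCone n)
    (x : EuclideanSpace ℝ (Fin n)) :
    r x = y ↔ ((∀ i, blockAvg y x i = y i) ∧ dle x y) := by
  classical
  obtain ⟨hrx, hrmin⟩ := hr x
  have hconv : Convex ℝ (domCone n) := Aux2.domCone_convex n
  have hy' : ∀ i j : Fin n, i ≤ j → y j ≤ y i := hy
  have hsub_inner : ∀ c : EuclideanSpace ℝ (Fin n),
      (inner ℝ (x - y) c : ℝ) = ∑ i, (x i - y i) * c i := by
    intro c
    rw [Aux2.inner_eq_sum]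
    apply Finset.sum_congr rfl
    intro i _
    rw [PiLp.sub_apply]
  have hdle_iff : dle x y ↔
      ((∀ k, 1 ≤ k → k < n → psum (fun i => x i - y i) k ≤ 0)
        ∧ psum (fun i => x i - y i) n = 0) := by
    unfold dle
    constructor
    · rintro ⟨h1, h2⟩
      exact ⟨fun k hk1 hk2 => by rw [Aux.psum_sub]; linarith [h1 k hk1 hk2],
        by rw [Aux.psum_sub, h2, sub_self]⟩
    · rintro ⟨h1, h2⟩
      constructor
      · intro k hk1 hk2
        have := h1 k hk1 hk2; rw [Aux.psum_sub] at this; linarith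
      · rw [Aux.psum_sub] at h2; linarith
  constructor
  · intro hr_eq
    rw [hr_eq] at hrmin
    have hvar : ∀ c ∈ domCone n, (inner ℝ (x - y) (c - y) : ℝ) ≤ 0 :=
      Aux2.closest_varineq hconv hy hrmin
    have hzero : (0 : EuclideanSpace ℝ (Fin n)) ∈ domCone n := by
      intro i j hij; exact le_refl (0 : ℝ)
    have hyy : y + y ∈ domCone n := by
      intro i j hij
      have := hy' i j hij
      show y j + y j ≤ y i + y i
      linarith
    have h1 : (inner ℝ (x - y) y : ℝ) = 0 := by
      have ha := hvar 0 hzero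
      have hb := hvar (y + y) hyy
      rw [zero_sub, inner_neg_right] at ha
      rw [add_sub_cancel_right] at hb
      linarith
    have h2 : ∀ c : Fin n → ℝ, (∀ i j : Fin n, i ≤ j → c j ≤ c i) →
        ∑ i, (x i - y i) * c i ≤ 0 := by
      intro c hc
      set ce : EuclideanSpace ℝ (Fin n) := (WithLp.equiv 2 (Fin n → ℝ)).symm c with hce
      have hcey : ce + y ∈ domCone n := by
        intro i j hij
        have hyij := hy' i j hij
        have hcij := hc i j hij
        show c j + y j ≤ c i + y i
        linarith
      have hv := hvar (ce + y) hcey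
      rw [add_sub_cancel_right] at hv
      have : (inner ℝ (x - y) ce : ℝ) = ∑ i, (x i - y i) * c i := by
        rw [hsub_inner]
        exact Finset.sum_congr rfl fun i _ => rfl
      linarith
    have hcone := (Aux.cone_iff (fun i => x i - y i)).mp h2
    have hdle : dle x y := hdle_iff.mpr hcone
    refine ⟨?_, hdle⟩
    have hinner_sum : ∑ i, (x i - y i) * y i = 0 := by
      rw [← hsub_inner y]; exact h1
    have hE := (Aux.inner_y_iff y hy' (fun i => x i - y i) hcone.1 hcone.2).mp hinner_sum
    intro i
    exact Aux.boundary_to_blockAvg y hy' x hE hcone.2 i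
  · rintro ⟨hA, hdle⟩
    obtain ⟨hmono, h0⟩ := hdle_iff.mp hdle
    have hE : ∀ k, (hk : k+1 < n) → y ⟨k, by omega⟩ ≠ y ⟨k+1, hk⟩ →
        psum (fun i => x i - y i) (k+1) = 0 := by
      intro k hk hne
      have hle' : y ⟨k+1, hk⟩ ≤ y ⟨k, by omega⟩ := hy' _ _ (by rw [Fin.le_def]; simp)
      have hlt : y ⟨k+1, hk⟩ < y ⟨k, by omega⟩ := lt_of_le_of_ne hle' (Ne.symm hne)
      exact Aux.blockAvg_to_psum y hy' x hA (k+1) ⟨k, by omega⟩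
        (Aux.S2_card_boundary y hy' k hk hlt)
    have hinner_sum : ∑ i, (x i - y i) * y i = 0 :=
      (Aux.inner_y_iff y hy' (fun i => x i - y i) hmono h0).mpr hE
    have hcone := (Aux.cone_iff (fun i => x i - y i)).mpr ⟨hmono, h0⟩
    have hvar : ∀ c ∈ domCone n, (inner ℝ (x - y) (c - y) : ℝ) ≤ 0 := by
      intro c hc
      rw [inner_sub_right]
      have hc0 : (inner ℝ (x - y) c : ℝ) ≤ 0 := by
        rw [hsub_inner]
        exact hcone (fun i => c i) hc
      have hcy : (inner ℝ (x - y) y : ℝ) = 0 := by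
        rw [hsub_inner]; exact hinner_sum
      linarith
    have hvar_r : ∀ c ∈ domCone n, (inner ℝ (x - r x) (c - r x) : ℝ) ≤ 0 :=
      Aux2.closest_varineq hconv hrx hrmin
    exact Aux2.eq_of_varineqs x (r x) y (hvar_r y hy) (hvar (r x) hrx)
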